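/- For the weight function w(i,j) = (i+j)/i², any infinite nondecreasing real sequence 1 = a_0 ≤ a_1 ≤ a_2 ≤ ... has total weight Σ_{k=0}^∞ (a_k + a_{k+1})/a_k² ≥ 3 + 2√2, with equality attained by the geometric sequence a_k = (1+√2)^k. -/

import Mathlib

open Real Filter

theorem stmt_11 :
    (∀ a : ℕ → ℝ, a 0 = 1 → Monotone a →
      ENNReal.ofReal (3 + 2 * Real.sqrt 2) ≤
        ∑' k : ℕ, ENNReal.ofReal ((a k + a (k+1)) / (a k) ^ 2)) ∧
    ∑' k : ℕ, (((1 + Real.sqrt 2) ^ k + (1 + Real.sqrt 2) ^ (k+1)) / ((1 + Real.sqrt 2) ^ k) ^ 2)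
      = 3 + 2 * Real.sqrt 2 := by
  have hs2 : Real.sqrt 2 ^ 2 = 2 := Real.sq_sqrt (by norm_num)
  have hs1 : 1 ≤ Real.sqrt 2 := by nlinarith [Real.sqrt_nonneg 2]
  set s := Real.sqrt 2 with hs_def
  constructor
  · intro a ha0 hmono
    have hak : ∀ k, 1 ≤ a k := fun k => ha0 ▸ hmono (Nat.zero_le k)
    set c : ℝ := 3 + 2 * s with hc
    have key : ∀ x y : ℝ, 1 ≤ x → x ≤ y → c * (1/x - 1/y) ≤ (x+y)/x^2 := by
      intro x y hx hxy
      have hx0 : (0:ℝ) < x := by linarith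
      have hy0 : (0:ℝ) < y := by linarith
      have h1 : 1/x - 1/y = (y - x)/(x*y) := by field_simp
      rw [h1, mul_div_assoc']
      rw [div_le_div_iff₀ (by positivity) (by positivity), hc]
      nlinarith [mul_nonneg hx0.le (sq_nonneg (y - (1+s)*x)), hs2,
        pow_nonneg hx0.le 3, mul_nonneg (mul_nonneg hx0.le hx0.le) hx0.le]
    have hterm_nonneg : ∀ k, 0 ≤ (a k + a (k+1))/(a k)^2 := fun k =>
      div_nonneg (by linarith [hak k, hak (k+1)]) (sq_nonneg _)
    have psum : ∀ n, c * (1 - 1/(a n)) ≤ ∑ k ∈ Finset.range n, (a k + a (k+1))/(a k)^2 := by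
      intro n
      induction n with
      | zero => simp [ha0]
      | succ n ih =>
        rw [Finset.sum_range_succ]
        have h := key (a n) (a (n+1)) (hak n) (hmono (Nat.le_succ n))
        linarith
    have hle : ∀ n, ENNReal.ofReal (c * (1 - 1/(a n))) ≤
        ∑' k : ℕ, ENNReal.ofReal ((a k + a (k+1)) / (a k) ^ 2) := by
      intro n
      calc ENNReal.ofReal (c * (1 - 1/(a n)))
          ≤ ENNReal.ofReal (∑ k ∈ Finset.range n, (a k + a (k+1))/(a k)^2) :=
            ENNReal.ofReal_le_ofReal (psum n)
        _ = ∑ k ∈ Finset.range n, ENNReal.ofReal ((a k + a (k+1))/(a k)^2) :=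
            ENNReal.ofReal_sum_of_nonneg (fun k _ => hterm_nonneg k)
        _ ≤ ∑' k : ℕ, ENNReal.ofReal ((a k + a (k+1)) / (a k) ^ 2) :=
            ENNReal.sum_le_tsum _
    by_cases hb : ∀ M : ℝ, ∃ n, M ≤ a n
    · have hat : Tendsto a atTop atTop :=
        tendsto_atTop_atTop_of_monotone hmono hb
      have h0 : Tendsto (fun n => 1/(a n)) atTop (nhds 0) := by
        simpa [one_div, Function.comp_def] using (tendsto_inv_atTop_zero.comp hat)
      have h1 : Tendsto (fun n => c * (1 - 1/(a n))) atTop (nhds c) := by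
        have := (tendsto_const_nhds (x := (1:ℝ)) (f := atTop)).sub h0
        have h2 := (tendsto_const_nhds (x := c) (f := (atTop : Filter ℕ))).mul this
        simpa using h2
      have h2 : Tendsto (fun n => ENNReal.ofReal (c * (1 - 1/(a n)))) atTop
          (nhds (ENNReal.ofReal c)) :=
        (ENNReal.continuous_ofReal.tendsto c).comp h1
      exact le_of_tendsto' h2 hle
    · push_neg at hb
      obtain ⟨M, hM⟩ := hb
      have hM1 : (1:ℝ) < M := by linarith [hak 0, hM 0]
      have hconst : ∀ k, ENNReal.ofReal (2/M^2) ≤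
          ENNReal.ofReal ((a k + a (k+1)) / (a k) ^ 2) := by
        intro k
        apply ENNReal.ofReal_le_ofReal
        apply div_le_div₀ (by linarith [hak k, hak (k+1)]) (by linarith [hak k, hak (k+1)])
          (pow_pos (by linarith [hak k]) 2)
        nlinarith [hM k, hak k]
      have htop : (⊤ : ENNReal) ≤ ∑' k : ℕ, ENNReal.ofReal ((a k + a (k+1)) / (a k) ^ 2) := by
        calc (⊤ : ENNReal) = ∑' _ : ℕ, ENNReal.ofReal (2/M^2) := by
              rw [ENNReal.tsum_const_eq_top_of_ne_zero]
              simp only [ne_eq, ENNReal.ofReal_eq_zero, not_le]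
              have : (0:ℝ) < M := by linarith
              positivity
          _ ≤ _ := ENNReal.tsum_le_tsum hconst
      exact le_trans le_top htop
  · have h1s : (0:ℝ) < 1 + s := by linarith
    have hterm : ∀ k : ℕ, ((1+s)^k + (1+s)^(k+1)) / ((1+s)^k)^2 = (2+s) * ((1+s)⁻¹)^k := by
      intro k
      have hne : (1+s)^k ≠ 0 := pow_ne_zero k (by linarith)
      rw [pow_succ, inv_pow]
      field_simp
      ring
    have hr0 : (0:ℝ) ≤ (1+s)⁻¹ := by positivity
    have hr1 : (1+s)⁻¹ < 1 := by
      rw [inv_lt_one_iff₀]; right; linarith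
    calc ∑' k : ℕ, ((1+s)^k + (1+s)^(k+1)) / ((1+s)^k)^2
        = ∑' k : ℕ, (2+s) * ((1+s)⁻¹)^k := tsum_congr hterm
      _ = (2+s) * ∑' k : ℕ, ((1+s)⁻¹)^k := tsum_mul_left
      _ = (2+s) * (1 - (1+s)⁻¹)⁻¹ := by rw [tsum_geometric_of_lt_one hr0 hr1]
      _ = 3 + 2*s := by
          have hsne : s ≠ 0 := by linarith
          field_simp
          rw [add_sub_cancel_left, div_eq_iff hsne]
          nlinarith [hs2]
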